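/- Let M be a nonempty multiset of positive integers with sum k', cardinality c, and in which j occurs with multiplicity a_j. Then there exists a polynomial P over ℚ of degree c with leading coefficient 1/∏_j (a_j)! such that for every natural number n with n ≥ k' - 1, the number of subsets S of {0, 1, …, n-1} whose multiset of lengths of maximal runs equals M equals P(n). -/

import Mathlib

def runLengths (S : Finset ℕ) : Multiset ℕ :=
  (S.filter fun a => a = 0 ∨ a - 1 ∉ S).val.map
    fun a => (S.filter fun x => a ≤ x ∧ Finset.Icc a x ⊆ S).card

/-- the counting function -/
def runCount (M : Multiset ℕ) (n : ℕ) : ℕ :=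
  ((Finset.range n).powerset.filter fun S => runLengths S = M).card

lemma runLengths_empty : runLengths (∅ : Finset ℕ) = 0 := by
  simp [runLengths]

lemma runLengths_eq_zero {S : Finset ℕ} (h : runLengths S = 0) : S = ∅ := by
  by_contra hne
  have hS : S.Nonempty := Finset.nonempty_iff_ne_empty.mpr hne
  have hmin := S.min'_mem hS
  have hstart : S.min' hS = 0 ∨ S.min' hS - 1 ∉ S := by
    rcases Nat.eq_zero_or_pos (S.min' hS) with h0 | h0
    · exact Or.inl h0
    · right
      intro hmem
      have := S.min'_le _ hmem
      omega
  have hmem : S.min' hS ∈ S.filter fun a => a = 0 ∨ a - 1 ∉ S :=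
    Finset.mem_filter.mpr ⟨hmin, hstart⟩
  have hcard := congrArg Multiset.card h
  simp only [runLengths, Multiset.card_map, Multiset.card_zero, ← Finset.card_def,
    Finset.card_eq_zero] at hcard
  rw [hcard] at hmem
  exact Finset.notMem_empty _ hmem

/-- Key union lemma -/
lemma runLengths_union_Icc (S : Finset ℕ) (a b : ℕ) (hab : a ≤ b)
    (hS : ∀ x ∈ S, x + 2 ≤ a) :
    runLengths (S ∪ Finset.Icc a b) = (b + 1 - a) ::ₘ runLengths S := by
  set T := S ∪ Finset.Icc a b with hT
  have hmemT : ∀ x, x ∈ T ↔ x ∈ S ∨ (a ≤ x ∧ x ≤ b) := by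
    intro x; simp [hT, Finset.mem_union, Finset.mem_Icc]
  have haS : a ∉ S := fun h => by have := hS a h; omega
  have hstarts : T.filter (fun x => x = 0 ∨ x - 1 ∉ T) =
      insert a (S.filter (fun x => x = 0 ∨ x - 1 ∉ S)) := by
    ext x
    rw [Finset.mem_filter, Finset.mem_insert, Finset.mem_filter, hmemT, hmemT]
    constructor
    · rintro ⟨hx | ⟨hax, hxb⟩, hst⟩
      · have hx2 := hS x hx
        right
        refine ⟨hx, ?_⟩
        rcases hst with h0 | h1
        · exact Or.inl h0
        · exact Or.inr fun hc => h1 (Or.inl hc)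
      · left
        by_contra hne
        have hax' : a < x := lt_of_le_of_ne hax (Ne.symm hne)
        rcases hst with h0 | h1
        · omega
        · exact h1 (Or.inr ⟨by omega, by omega⟩)
    · rintro (heq | ⟨hxS, hst⟩)
      · subst heq
        refine ⟨Or.inr ⟨le_refl x, hab⟩, ?_⟩
        rcases Nat.eq_zero_or_pos x with h0 | h0
        · exact Or.inl h0
        · refine Or.inr ?_
          rintro (hc | ⟨hc1, hc2⟩)
          · have := hS _ hc; omega
          · omega
      · have hx2 := hS x hxS
        refine ⟨Or.inl hxS, ?_⟩
        rcases hst with h0 | h1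
        · exact Or.inl h0
        · refine Or.inr ?_
          rintro (hc | ⟨hc1, hc2⟩)
          · exact h1 hc
          · omega
  have haF : a ∉ S.filter (fun x => x = 0 ∨ x - 1 ∉ S) :=
    fun h => haS (Finset.mem_filter.mp h).1
  have hga : (T.filter fun y => a ≤ y ∧ Finset.Icc a y ⊆ T).card = b + 1 - a := by
    have : (T.filter fun y => a ≤ y ∧ Finset.Icc a y ⊆ T) = Finset.Icc a b := by
      ext y
      rw [Finset.mem_filter, hmemT, Finset.mem_Icc]
      constructor
      · rintro ⟨hy | hy, hay, hsub⟩
        · have := hS y hy; omega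
        · exact hy
      · rintro ⟨hay, hyb⟩
        refine ⟨Or.inr ⟨hay, hyb⟩, hay, fun z hz => ?_⟩
        rw [Finset.mem_Icc] at hz
        rw [hmemT]
        exact Or.inr ⟨hz.1, le_trans hz.2 hyb⟩
    rw [this, Nat.card_Icc]
  have hgx : ∀ x ∈ S, (T.filter fun y => x ≤ y ∧ Finset.Icc x y ⊆ T) =
      S.filter fun y => x ≤ y ∧ Finset.Icc x y ⊆ S := by
    intro x hxS
    have hx2 := hS x hxS
    ext y
    rw [Finset.mem_filter, Finset.mem_filter, hmemT]
    constructor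
    · rintro ⟨hy | ⟨hay, hyb⟩, hxy, hsub⟩
      · refine ⟨hy, hxy, fun z hz => ?_⟩
        have hzT := hsub hz
        rw [Finset.mem_Icc] at hz
        have hy2 := hS y hy
        rw [hmemT] at hzT
        rcases hzT with h | h
        · exact h
        · omega
      · exfalso
        have hmem : a - 1 ∈ Finset.Icc x y := by
          rw [Finset.mem_Icc]; omega
        have := hsub hmem
        rw [hmemT] at this
        rcases this with h | h
        · have := hS _ h; omega
        · omega
    · rintro ⟨hyS, hxy, hsub⟩
      exact ⟨Or.inl hyS, hxy, fun z hz => by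
        rw [hmemT]; exact Or.inl (hsub hz)⟩
  show (T.filter fun x => x = 0 ∨ x - 1 ∉ T).val.map
      (fun x => (T.filter fun y => x ≤ y ∧ Finset.Icc x y ⊆ T).card) = _
  rw [hstarts, Finset.insert_val_of_notMem haF, Multiset.map_cons, hga]
  congr 1
  refine Multiset.map_congr rfl fun x hx => ?_
  have hxS : x ∈ S := (Finset.mem_filter.mp hx).1
  rw [hgx x hxS]

lemma runCount_zero (n : ℕ) : runCount 0 n = 1 := by
  unfold runCount
  have h : (Finset.range n).powerset.filter (fun S => runLengths S = 0) = {∅} := by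
    ext S
    simp only [Finset.mem_filter, Finset.mem_powerset, Finset.mem_singleton]
    constructor
    · rintro ⟨-, h⟩; exact runLengths_eq_zero h
    · rintro rfl; exact ⟨Finset.empty_subset _, runLengths_empty⟩
  rw [h, Finset.card_singleton]

lemma aux_decomp (n : ℕ) (T : Finset ℕ) (hnT : n ∈ T) :
    ∃ a, a ≤ n ∧ (∀ x ∈ T, x ≤ n → (a ≤ x ∨ x + 2 ≤ a)) ∧ Finset.Icc a n ⊆ T := by
  have hself : Finset.Icc n n ⊆ T := by
    intro z hz
    rw [Finset.mem_Icc] at hz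
    have : z = n := le_antisymm hz.2 hz.1
    rwa [this]
  have hex : ∃ a, Finset.Icc a n ⊆ T := ⟨n, hself⟩
  refine ⟨Nat.find hex, Nat.find_min' hex hself, ?_, Nat.find_spec hex⟩
  intro x hxT hxn
  by_contra hcon
  push_neg at hcon
  obtain ⟨h1, h2⟩ := hcon
  have hfind := Nat.find_spec hex
  have hsub : Finset.Icc x n ⊆ T := by
    intro z hz
    rw [Finset.mem_Icc] at hz
    rcases Nat.eq_or_lt_of_le hz.1 with h | h
    · rwa [← h]
    · exact hfind (Finset.mem_Icc.mpr ⟨by omega, hz.2⟩)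
  have := Nat.find_min' hex hsub
  omega

/-- the recurrence -/
lemma runCount_succ (M : Multiset ℕ) (hM : M ≠ 0) (hpos : ∀ j ∈ M, 0 < j) (n : ℕ) :
    runCount M (n + 1) = runCount M n +
      ∑ l ∈ M.toFinset.filter (· ≤ n + 1), runCount (M.erase l) (n - l) := by
  classical
  set A := (Finset.range (n+1)).powerset.filter (fun S => runLengths S = M) with hA
  set filt := M.toFinset.filter (· ≤ n + 1) with hfilt
  set img : ℕ → Finset (Finset ℕ) := fun l =>
    ((Finset.range (n - l)).powerset.filter (fun S => runLengths S = M.erase l)).image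
      (fun S' => S' ∪ Finset.Icc (n + 1 - l) n) with himg
  have hsplit : A.card = (A.filter fun S => ¬ n ∈ S).card + (A.filter fun S => n ∈ S).card := by
    rw [add_comm]
    exact (Finset.card_filter_add_card_filter_not (fun S => n ∈ S)).symm
  -- sets not containing n
  have h1 : (A.filter fun S => ¬ n ∈ S)
      = (Finset.range n).powerset.filter (fun S => runLengths S = M) := by
    ext S
    simp only [hA, Finset.mem_filter, Finset.mem_powerset]
    constructor
    · rintro ⟨⟨hsub, hrl⟩, hn⟩
      refine ⟨fun x hx => ?_, hrl⟩
      have hx1 := hsub hx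
      rw [Finset.mem_range] at hx1 ⊢
      rcases Nat.lt_succ_iff_lt_or_eq.mp hx1 with h | h
      · exact h
      · exact absurd (h ▸ hx) hn
    · rintro ⟨hsub, hrl⟩
      have hn : ¬ n ∈ S := fun h => by
        have := hsub h; rw [Finset.mem_range] at this; omega
      refine ⟨⟨fun x hx => ?_, hrl⟩, hn⟩
      have := hsub hx
      rw [Finset.mem_range] at this ⊢
      omega
  -- basic facts about the pieces
  have hrep : ∀ l ∈ filt, ∀ S' ∈ (Finset.range (n - l)).powerset.filter
      (fun S => runLengths S = M.erase l),
      runLengths (S' ∪ Finset.Icc (n + 1 - l) n) = M ∧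
      (S' ∪ Finset.Icc (n + 1 - l) n).filter (· < n + 1 - l) = S' ∧
      (l ≤ n → n - l ∉ S' ∪ Finset.Icc (n + 1 - l) n) := by
    intro l hl S' hS'
    rw [hfilt, Finset.mem_filter, Multiset.mem_toFinset] at hl
    obtain ⟨hlM, hln⟩ := hl
    have hl1 : 1 ≤ l := hpos l hlM
    rw [Finset.mem_filter, Finset.mem_powerset] at hS'
    obtain ⟨hS'sub, hS'rl⟩ := hS'
    have hsmall : ∀ x ∈ S', x < n - l := fun x hx => by
      have := hS'sub hx; rwa [Finset.mem_range] at this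
    have hgap : ∀ x ∈ S', x + 2 ≤ n + 1 - l := fun x hx => by
      have := hsmall x hx; omega
    have hrun := runLengths_union_Icc S' (n + 1 - l) n (by omega) hgap
    refine ⟨?_, ?_, ?_⟩
    · rw [hrun, hS'rl]
      have : n + 1 - (n + 1 - l) = l := by omega
      rw [this, Multiset.cons_erase hlM]
    · ext x
      rw [Finset.mem_filter, Finset.mem_union, Finset.mem_Icc]
      constructor
      · rintro ⟨hx | hx, hlt⟩
        · exact hx
        · omega
      · intro hx
        have := hsmall x hx
        exact ⟨Or.inl hx, by omega⟩
    · intro hln'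
      rw [Finset.mem_union, Finset.mem_Icc]
      rintro (h | h)
      · have := hsmall _ h; omega
      · omega
  -- sets containing n are the union of the images
  have h2 : (A.filter fun S => n ∈ S) = filt.biUnion img := by
    ext T
    simp only [hA, Finset.mem_filter, Finset.mem_powerset, Finset.mem_biUnion]
    constructor
    · rintro ⟨⟨hsub, hrl⟩, hnT⟩
      obtain ⟨a, han, hmin, hIcc⟩ := aux_decomp n T hnT
      set S' := T.filter (· < a) with hS'
      have hgap : ∀ x ∈ S', x + 2 ≤ a := by
        intro x hx
        rw [hS', Finset.mem_filter] at hx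
        have hxn := hsub hx.1
        rw [Finset.mem_range] at hxn
        rcases hmin x hx.1 (by omega) with h | h
        · omega
        · exact h
      have hTeq : T = S' ∪ Finset.Icc a n := by
        ext x
        rw [Finset.mem_union, hS', Finset.mem_filter, Finset.mem_Icc]
        constructor
        · intro hx
          have hxn := hsub hx
          rw [Finset.mem_range] at hxn
          rcases lt_or_ge x a with h | h
          · exact Or.inl ⟨hx, h⟩
          · exact Or.inr ⟨h, by omega⟩
        · rintro (⟨hx, -⟩ | hx)
          · exact hx
          · exact hIcc (Finset.mem_Icc.mpr hx)
      have hrun : runLengths T = (n + 1 - a) ::ₘ runLengths S' := by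
        rw [hTeq]
        exact runLengths_union_Icc S' a n han hgap
      refine ⟨n + 1 - a, ?_, ?_⟩
      · rw [hfilt, Finset.mem_filter, Multiset.mem_toFinset]
        constructor
        · rw [← hrl, hrun]; exact Multiset.mem_cons_self _ _
        · omega
      · rw [himg, Finset.mem_image]
        refine ⟨S', ?_, ?_⟩
        · rw [Finset.mem_filter, Finset.mem_powerset]
          constructor
          · intro x hx
            rw [Finset.mem_range]
            have := hgap x hx
            omega
          · rw [← hrl, hrun, Multiset.erase_cons_head]
        · have haeq : n + 1 - (n + 1 - a) = a := by omega
          rw [haeq, ← hTeq]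
    · rintro ⟨l, hl, hT⟩
      have hl' := hl
      rw [hfilt, Finset.mem_filter, Multiset.mem_toFinset] at hl'
      have hl1 : 1 ≤ l := hpos l hl'.1
      rw [himg, Finset.mem_image] at hT
      obtain ⟨S', hS', rfl⟩ := hT
      have hfacts := hrep l hl S' hS'
      rw [Finset.mem_filter, Finset.mem_powerset] at hS'
      refine ⟨⟨?_, hfacts.1⟩, ?_⟩
      · intro x hx
        rw [Finset.mem_union, Finset.mem_Icc] at hx
        rw [Finset.mem_range]
        rcases hx with h | h
        · have := hS'.1 h; rw [Finset.mem_range] at this; omega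
        · omega
      · rw [Finset.mem_union, Finset.mem_Icc]
        exact Or.inr ⟨by omega, le_refl n⟩
  -- disjointness of the images
  have hdisjlt : ∀ l₁ l₂, l₁ ∈ filt → l₂ ∈ filt → l₁ < l₂ → Disjoint (img l₁) (img l₂) := by
    intro l₁ l₂ hl₁ hl₂ hlt
    rw [Finset.disjoint_left]
    intro T hT1 hT2
    have hl₂' := hl₂
    rw [hfilt, Finset.mem_filter] at hl₂'
    rw [himg, Finset.mem_image] at hT1 hT2
    obtain ⟨S₁, hS₁, hTe₁⟩ := hT1
    obtain ⟨S₂, hS₂, hTe₂⟩ := hT2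
    have hf₁ := (hrep l₁ hl₁ S₁ hS₁).2.2
    rw [hTe₁] at hf₁
    have hnl₁ : n - l₁ ∉ T := hf₁ (by omega)
    apply hnl₁
    rw [← hTe₂, Finset.mem_union, Finset.mem_Icc]
    exact Or.inr ⟨by omega, by omega⟩
  have hdisj : ∀ l₁ ∈ filt, ∀ l₂ ∈ filt, l₁ ≠ l₂ → Disjoint (img l₁) (img l₂) := by
    intro l₁ h₁ l₂ h₂ hne
    rcases hne.lt_or_gt with h | h
    · exact hdisjlt _ _ h₁ h₂ h
    · exact (hdisjlt _ _ h₂ h₁ h).symm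
  -- image cardinalities
  have hcard : ∀ l ∈ filt, (img l).card = runCount (M.erase l) (n - l) := by
    intro l hl
    rw [himg]
    unfold runCount
    apply Finset.card_image_of_injOn
    intro S₁ h₁ S₂ h₂ heq
    have e₁ := (hrep l hl S₁ h₁).2.1
    have e₂ := (hrep l hl S₂ h₂).2.1
    have heq' : S₁ ∪ Finset.Icc (n + 1 - l) n = S₂ ∪ Finset.Icc (n + 1 - l) n := heq
    rw [← e₁, ← e₂, heq']
  show A.card = _
  rw [hsplit, h1, h2, Finset.card_biUnion hdisj]
  unfold runCount
  congr 1
  exact Finset.sum_congr rfl hcard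


lemma pos_card_le_sum (M : Multiset ℕ) (hpos : ∀ j ∈ M, 0 < j) : M.card ≤ M.sum := by
  induction M using Multiset.induction with
  | empty => simp
  | cons a s ih =>
    simp only [Multiset.card_cons, Multiset.sum_cons]
    have ha := hpos a (Multiset.mem_cons_self a s)
    have := ih (fun j hj => hpos j (Multiset.mem_cons_of_mem hj))
    omega

/-- the ℕ-level choose identity -/
lemma key_nat (M : Multiset ℕ) (hM : M ≠ 0) (hpos : ∀ j ∈ M, 0 < j) (n : ℕ) :
    M.card.factorial * (n + 2 - M.sum).choose M.card =
      M.card.factorial * (n + 1 - M.sum).choose M.card +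
      ∑ l ∈ M.toFinset.filter (· ≤ n + 1),
        M.count l * ((M.card - 1).factorial *
          ((n - l) + 1 - (M.sum - l)).choose (M.card - 1)) := by
  have hc : 0 < M.card := Multiset.card_pos.mpr hM
  have hls : ∀ l ∈ M, l ≤ M.sum := fun l hl =>
    Multiset.single_le_sum (fun x _ => Nat.zero_le x) l hl
  have herase : ∀ l ∈ M, M.card - 1 = (M.erase l).card ∧ l + (M.erase l).sum = M.sum ∧
      (M.erase l).card ≤ (M.erase l).sum ∧ ((M.erase l).card = 0 → (M.erase l).sum = 0) := by
    intro l hl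
    have hcons := Multiset.cons_erase hl
    refine ⟨?_, ?_, pos_card_le_sum _ (fun j hj => hpos j (Multiset.mem_of_mem_erase hj)), ?_⟩
    · rw [Multiset.card_erase_of_mem hl]
      rfl
    · conv_rhs => rw [← hcons]
      rw [Multiset.sum_cons]
    · intro h0
      rw [Multiset.card_eq_zero.mp h0]
      rfl
  rcases le_or_gt M.sum (n+1) with hk | hk
  · -- n + 1 ≥ sum : Pascal case
    have hfilt : M.toFinset.filter (· ≤ n + 1) = M.toFinset :=
      Finset.filter_true_of_mem fun l hl =>
        le_trans (hls l (Multiset.mem_toFinset.mp hl)) hk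
    rw [hfilt]
    have hterm : ∀ l ∈ M.toFinset,
        M.count l * ((M.card - 1).factorial *
          ((n - l) + 1 - (M.sum - l)).choose (M.card - 1)) =
        M.count l * ((M.card - 1).factorial *
          (n + 1 - M.sum).choose (M.card - 1)) := by
      intro l hl
      rw [Multiset.mem_toFinset] at hl
      have h1 := hls l hl
      rcases le_or_gt l n with h | h
      · have : (n - l) + 1 - (M.sum - l) = n + 1 - M.sum := by omega
        rw [this]
      · -- l = n + 1 = M.sum, forcing M.card = 1
        obtain ⟨he1, he2, he3, he4⟩ := herase l hl
        have hcc : M.card - 1 = 0 := by omega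
        rw [hcc, Nat.choose_zero_right, Nat.choose_zero_right]
    rw [Finset.sum_congr rfl hterm, ← Finset.sum_mul, Multiset.toFinset_sum_count_eq,
      ← mul_assoc, Nat.mul_factorial_pred hc.ne']
    have h2 : n + 2 - M.sum = (n + 1 - M.sum) + 1 := by omega
    rw [h2]
    obtain ⟨c', hc'⟩ : ∃ c', M.card = c' + 1 := ⟨M.card - 1, by omega⟩
    rw [hc']
    simp only [Nat.add_sub_cancel]
    rw [Nat.choose_succ_succ']
    ring
  · -- n + 1 < sum : everything vanishes
    have hz1 : n + 2 - M.sum = 0 := by omega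
    have hz2 : n + 1 - M.sum = 0 := by omega
    have hsum : ∑ l ∈ M.toFinset.filter (· ≤ n + 1),
        M.count l * ((M.card - 1).factorial *
          ((n - l) + 1 - (M.sum - l)).choose (M.card - 1)) = 0 := by
      apply Finset.sum_eq_zero
      intro l hl
      rw [Finset.mem_filter, Multiset.mem_toFinset] at hl
      obtain ⟨hlM, hln⟩ := hl
      obtain ⟨he1, he2, he3, he4⟩ := herase l hlM
      have harg : (n - l) + 1 - (M.sum - l) = 0 := by omega
      have hcpos : 0 < M.card - 1 := by omega
      rw [harg, Nat.choose_eq_zero_of_lt hcpos, mul_zero, mul_zero]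
    rw [hz1, hz2, Nat.choose_eq_zero_of_lt hc, hsum]
    simp

lemma prod_erase_fact (M : Multiset ℕ) (l : ℕ) (hl : l ∈ M) :
    M.count l * ∏ j ∈ (M.erase l).toFinset, ((M.erase l).count j).factorial =
      ∏ j ∈ M.toFinset, (M.count j).factorial := by
  classical
  have h1 : ∏ j ∈ (M.erase l).toFinset, ((M.erase l).count j).factorial =
      ∏ j ∈ M.toFinset, ((M.erase l).count j).factorial :=
    Finset.prod_subset
      (fun x hx => Multiset.mem_toFinset.mpr
        (Multiset.mem_of_mem_erase (Multiset.mem_toFinset.mp hx)))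
      (fun x _ hnx => by
        rw [Multiset.count_eq_zero.mpr (fun hc => hnx (Multiset.mem_toFinset.mpr hc))]
        rfl)
  rw [h1, ← Finset.mul_prod_erase M.toFinset _ (Multiset.mem_toFinset.mpr hl),
    ← Finset.mul_prod_erase M.toFinset (fun j => (M.count j).factorial)
      (Multiset.mem_toFinset.mpr hl)]
  have h2 : ∏ j ∈ M.toFinset.erase l, ((M.erase l).count j).factorial =
      ∏ j ∈ M.toFinset.erase l, (M.count j).factorial :=
    Finset.prod_congr rfl fun j hj => by
      rw [Multiset.count_erase_of_ne (Finset.ne_of_mem_erase hj)]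
  rw [h2, Multiset.count_erase_self, ← mul_assoc]
  congr 1
  exact Nat.mul_factorial_pred (Multiset.count_pos.mpr hl).ne'

/-- the closed form, ℕ version -/
lemma closed_form : ∀ n : ℕ, ∀ M : Multiset ℕ, (∀ j ∈ M, 0 < j) →
    runCount M n * ∏ j ∈ M.toFinset, (M.count j).factorial =
      M.card.factorial * (n + 1 - M.sum).choose M.card := by
  intro n
  induction n using Nat.strong_induction_on with
  | _ n ih =>
    intro M hpos
    by_cases hM : M = 0
    · subst hM
      simp [runCount_zero]
    cases n with
    | zero =>
      have h0 : runCount M 0 = 0 := by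
        unfold runCount
        rw [Finset.card_eq_zero]
        ext S
        simp only [Finset.mem_filter, Finset.mem_powerset, Finset.range_zero,
          Finset.subset_empty, Finset.notMem_empty, iff_false, not_and]
        rintro rfl hrl
        exact hM (by rw [← hrl, runLengths_empty])
      rw [h0]
      have hc : 0 < M.card := Multiset.card_pos.mpr hM
      have hsum : 0 < M.sum := by
        obtain ⟨a, ha⟩ := Multiset.exists_mem_of_ne_zero hM
        have h1 := hpos a ha
        have h2 := Multiset.single_le_sum (fun x _ => Nat.zero_le x) a ha
        omega
      have hz : 0 + 1 - M.sum = 0 := by omega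
      rw [hz, Nat.choose_eq_zero_of_lt hc]
      ring
    | succ n =>
      rw [runCount_succ M hM hpos n, add_mul, Finset.sum_mul,
        ih n (by omega) M hpos]
      have hterm : ∀ l ∈ M.toFinset.filter (· ≤ n + 1),
          runCount (M.erase l) (n - l) * ∏ j ∈ M.toFinset, (M.count j).factorial =
          M.count l * ((M.card - 1).factorial *
            ((n - l) + 1 - (M.sum - l)).choose (M.card - 1)) := by
        intro l hl
        rw [Finset.mem_filter, Multiset.mem_toFinset] at hl
        obtain ⟨hlM, hln⟩ := hl
        have hih := ih (n - l) (by have := hpos l hlM; omega) (M.erase l)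
          (fun j hj => hpos j (Multiset.mem_of_mem_erase hj))
        have hc1 : (M.erase l).card = M.card - 1 := by
          rw [Multiset.card_erase_of_mem hlM]
          rfl
        have hsume : (M.erase l).sum = M.sum - l := by
          have h := congrArg Multiset.sum (Multiset.cons_erase hlM)
          rw [Multiset.sum_cons] at h
          omega
        rw [hc1, hsume] at hih
        rw [← prod_erase_fact M l hlM, ← mul_assoc,
          mul_comm (runCount (M.erase l) (n - l)) (M.count l), mul_assoc, hih]
      rw [Finset.sum_congr rfl hterm]
      exact (key_nat M hM hpos n).symm

lemma prod_cast_choose (m c : ℕ) :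
    ∏ i ∈ Finset.range c, ((m : ℚ) - i) = (c.factorial : ℚ) * (m.choose c) := by
  induction c with
  | zero => simp
  | succ c ih =>
    rcases lt_or_ge m (c + 1) with h | h
    · rw [Finset.prod_eq_zero (Finset.mem_range.mpr h) (by simp),
        Nat.choose_eq_zero_of_lt h]
      simp
    · rw [Finset.prod_range_succ, ih]
      have hcast : (m : ℚ) - c = ((m - c : ℕ) : ℚ) := by
        rw [Nat.cast_sub (by omega)]
      rw [hcast]
      have hnat : c.factorial * m.choose c * (m - c) =
          (c + 1).factorial * m.choose (c + 1) := by
        rw [Nat.factorial_succ, mul_assoc, ← Nat.choose_succ_right_eq]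
        ring
      exact_mod_cast congrArg (Nat.cast (R := ℚ)) hnat

/-- Let `M` be a nonempty multiset of positive integers with sum
`k'` and cardinality `c`, in which `j` occurs with multiplicity `a_j = M.count j`.
There is a polynomial `P` over `ℚ` of degree `c` with leading coefficient
`1 / ∏_j (a_j)!` such that for all `n ≥ k' - 1`, the number of subsets of
`{0, …, n-1}` whose multiset of maximal run lengths is `M` equals `P(n)`. -/
theorem statement3 (M : Multiset ℕ) (hM : M ≠ 0) (hpos : ∀ j ∈ M, 0 < j)
    (k' c : ℕ) (hk' : k' = M.sum) (hc : c = M.card) :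
    ∃ P : Polynomial ℚ, P.natDegree = c ∧
      P.leadingCoeff = 1 / ∏ j ∈ M.toFinset, ((M.count j).factorial : ℚ) ∧
      ∀ n : ℕ, k' - 1 ≤ n →
        ((((Finset.range n).powerset.filter fun S => runLengths S = M).card : ℚ)) =
          P.eval (n : ℚ) := by
  classical
  subst hk' hc
  have hcpos : 0 < M.card := Multiset.card_pos.mpr hM
  have hk1 : 1 ≤ M.sum := by
    obtain ⟨a, ha⟩ := Multiset.exists_mem_of_ne_zero hM
    have h1 := hpos a ha
    have h2 := Multiset.single_le_sum (fun x _ => Nat.zero_le x) a ha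
    omega
  set A : ℚ := ∏ j ∈ M.toFinset, ((M.count j).factorial : ℚ) with hA
  have hAnat : A = ((∏ j ∈ M.toFinset, (M.count j).factorial : ℕ) : ℚ) := by
    rw [hA, Nat.cast_prod]
  have hAne : A ≠ 0 := by
    rw [hAnat]
    have : 0 < ∏ j ∈ M.toFinset, (M.count j).factorial :=
      Finset.prod_pos fun j _ => Nat.factorial_pos _
    exact_mod_cast this.ne'
  set Q : Polynomial ℚ :=
    ∏ i ∈ Finset.range M.card, (Polynomial.X - Polynomial.C ((M.sum - 1 + i : ℕ) : ℚ))
    with hQ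
  have hQmonic : Q.Monic :=
    Polynomial.monic_prod_of_monic _ _ fun i _ => Polynomial.monic_X_sub_C _
  have hQdeg : Q.natDegree = M.card := by
    rw [hQ, Polynomial.natDegree_prod_of_monic _ _ fun i _ => Polynomial.monic_X_sub_C _]
    simp only [Polynomial.natDegree_X_sub_C, Finset.sum_const, smul_eq_mul, mul_one,
      Finset.card_range]
  refine ⟨Polynomial.C (1 / A) * Q, ?_, ?_, ?_⟩
  · rw [Polynomial.natDegree_C_mul (by positivity), hQdeg]
  · rw [Polynomial.leadingCoeff_mul, Polynomial.leadingCoeff_C, hQmonic.leadingCoeff, mul_one]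
  · intro n hn
    have hcf := closed_form n M hpos
    have hcast : (runCount M n : ℚ) * A =
        (M.card.factorial : ℚ) * (((n + 1 - M.sum).choose M.card : ℕ) : ℚ) := by
      rw [hAnat]
      exact_mod_cast congrArg (Nat.cast (R := ℚ)) hcf
    have heval : (Polynomial.C (1 / A) * Q).eval (n : ℚ) =
        (1 / A) * ∏ i ∈ Finset.range M.card, ((n : ℚ) - ((M.sum - 1 + i : ℕ) : ℚ)) := by
      simp [hQ, Polynomial.eval_prod]
    rw [heval]
    have hprod : ∏ i ∈ Finset.range M.card, ((n : ℚ) - ((M.sum - 1 + i : ℕ) : ℚ)) =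
        (M.card.factorial : ℚ) * ((n + 1 - M.sum).choose M.card : ℕ) := by
      rw [← prod_cast_choose (n + 1 - M.sum) M.card]
      refine Finset.prod_congr rfl fun i _ => ?_
      have h1 : ((M.sum - 1 + i : ℕ) : ℚ) = ((M.sum - 1 : ℕ) : ℚ) + (i : ℚ) := by
        push_cast
        ring
      have h2 : ((n + 1 - M.sum : ℕ) : ℚ) = (n : ℚ) - ((M.sum - 1 : ℕ) : ℚ) := by
        have he : n + 1 - M.sum = n - (M.sum - 1) := by omega
        rw [he, Nat.cast_sub hn]
      rw [h1, h2]
      ring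
    rw [hprod]
    show (runCount M n : ℚ) = _
    field_simp at hcast ⊢
    linarith [hcast]
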